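/- For every x ∈ conv(A₀) + K one has 0 ≤ h(x) ≤ 1, the supremum defining h(x) is attained, and h(x) = 1 if and only if x ∈ b₀ + K (the translate of K by b₀). -/

import Mathlib

open Pointwise

/-- The lifted polytope `L = conv((A₀×{0}) ∪ {(b₀,1)}) + K×{0}` in `ℝⁿ×ℝ`. -/
def liftedPolytope (n : ℕ) (A₀ : Finset (Fin n → ℝ)) (b₀ : Fin n → ℝ)
    (K : Set (Fin n → ℝ)) : Set ((Fin n → ℝ) × ℝ) :=
  convexHull ℝ (((A₀ : Set (Fin n → ℝ)) ×ˢ ({0} : Set ℝ)) ∪ {(b₀, 1)})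
    + K ×ˢ ({0} : Set ℝ)

/-- The height function `h(x) = sup{t : (x,t) ∈ L}`. -/
noncomputable def heightFn (n : ℕ) (A₀ : Finset (Fin n → ℝ)) (b₀ : Fin n → ℝ)
    (K : Set (Fin n → ℝ)) (x : Fin n → ℝ) : ℝ :=
  sSup {t : ℝ | (x, t) ∈ liftedPolytope n A₀ b₀ K}

/-- For every `x ∈ conv(A₀) + K` one has `0 ≤ h(x) ≤ 1`, the supremum
defining `h(x)` is attained, and `h(x) = 1` iff `x` lies in the translate
`b₀ + K`. -/
theorem heightFn_bounds_attained_eq_one_iff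
    (n : ℕ) (A₀ : Finset (Fin n → ℝ)) (b₀ : Fin n → ℝ) (hb₀ : b₀ ∈ A₀)
    (K : Set (Fin n → ℝ)) (hKne : K.Nonempty) (hKcp : IsCompact K)
    (hKcv : Convex ℝ K) :
    ∀ x ∈ convexHull ℝ (A₀ : Set (Fin n → ℝ)) + K,
      0 ≤ heightFn n A₀ b₀ K x ∧ heightFn n A₀ b₀ K x ≤ 1 ∧
      (x, heightFn n A₀ b₀ K x) ∈ liftedPolytope n A₀ b₀ K ∧
      (heightFn n A₀ b₀ K x = 1 ↔ x ∈ ({b₀} : Set (Fin n → ℝ)) + K) := by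
  intro x hx
  set S : Set ((Fin n → ℝ) × ℝ) :=
    ((A₀ : Set (Fin n → ℝ)) ×ˢ ({0} : Set ℝ)) ∪ {(b₀, 1)} with hSdef
  have hSfin : S.Finite :=
    (A₀.finite_toSet.prod (Set.finite_singleton _)).union (Set.finite_singleton _)
  have hLcp : IsCompact (liftedPolytope n A₀ b₀ K) :=
    (hSfin.isCompact_convexHull (𝕜 := ℝ)).add (hKcp.prod isCompact_singleton)
  -- snd bounds on conv S
  have hsndIcc : convexHull ℝ S ⊆ Prod.snd ⁻¹' Set.Icc (0:ℝ) 1 := by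
    apply convexHull_min
    · rintro p (⟨_, hp2⟩ | hp)
      · simp only [Set.mem_singleton_iff] at hp2
        simp [Set.mem_preimage, hp2]
      · simp only [Set.mem_singleton_iff] at hp
        simp [Set.mem_preimage, hp]
    · exact (convex_Icc 0 1).linear_preimage (LinearMap.snd ℝ _ _)
  -- the fiber over x
  set F : Set ℝ := {t : ℝ | (x, t) ∈ liftedPolytope n A₀ b₀ K} with hFdef
  have hFsub : F ⊆ Set.Icc (0:ℝ) 1 := by
    rintro t ht
    obtain ⟨p, hp, q, hq, hpq⟩ := Set.mem_add.mp ht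
    have hq2 : q.2 = 0 := hq.2
    have h2 : p.2 + q.2 = t := congrArg Prod.snd hpq
    have hp2 : p.2 ∈ Set.Icc (0:ℝ) 1 := hsndIcc hp
    have ht' : t = p.2 := by rw [← h2, hq2, add_zero]
    rw [ht']; exact hp2
  have hFbdd : BddAbove F := ⟨1, fun t ht => (hFsub ht).2⟩
  -- 0 ∈ F
  obtain ⟨y, hy, k, hk, hyk⟩ := Set.mem_add.mp hx
  have hy0 : ((y, 0) : (Fin n → ℝ) × ℝ) ∈ convexHull ℝ S := by
    have hsub : (A₀ : Set (Fin n → ℝ)) ⊆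
        (LinearMap.inl ℝ (Fin n → ℝ) ℝ) ⁻¹' (convexHull ℝ S) := by
      intro a ha
      exact subset_convexHull ℝ S (Or.inl ⟨ha, rfl⟩)
    have := convexHull_min hsub
      ((convex_convexHull ℝ S).linear_preimage (LinearMap.inl ℝ (Fin n → ℝ) ℝ))
    exact this hy
  have h0F : (0:ℝ) ∈ F := by
    refine Set.mem_add.mpr ⟨(y, 0), hy0, (k, 0), ⟨hk, rfl⟩, ?_⟩
    simp [Prod.ext_iff, hyk]
  have hFne : F.Nonempty := ⟨0, h0F⟩
  -- F is compact
  have hFclosed : IsClosed F := by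
    have : F = (fun t : ℝ => ((x, t) : (Fin n → ℝ) × ℝ)) ⁻¹' liftedPolytope n A₀ b₀ K := rfl
    rw [this]
    exact hLcp.isClosed.preimage (by fun_prop)
  have hFcp : IsCompact F := isCompact_Icc.of_isClosed_subset hFclosed hFsub
  have hmem : sSup F ∈ F := hFcp.sSup_mem hFne
  have hh : heightFn n A₀ b₀ K x = sSup F := rfl
  have h01 : sSup F ∈ Set.Icc (0:ℝ) 1 := hFsub hmem
  refine ⟨hh ▸ h01.1, hh ▸ h01.2, hh ▸ hmem, ?_⟩
  rw [hh]
  constructor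
  · intro h1
    have h1F : (x, (1:ℝ)) ∈ liftedPolytope n A₀ b₀ K := by
      have : (1:ℝ) ∈ F := h1 ▸ hmem
      exact this
    obtain ⟨p, hp, q, hq, hpq⟩ := Set.mem_add.mp h1F
    have hq2 : q.2 = 0 := hq.2
    have h2 : p.2 + q.2 = 1 := congrArg Prod.snd hpq
    have hp2 : p.2 = 1 := by rw [hq2, add_zero] at h2; exact h2
    -- decompose conv S as a convex join
    have hAne : ((A₀ : Set (Fin n → ℝ)) ×ˢ ({0} : Set ℝ)).Nonempty :=
      ⟨(b₀, 0), ⟨hb₀, rfl⟩⟩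
    have hjoin : convexHull ℝ S = convexJoin ℝ
        (convexHull ℝ ((A₀ : Set (Fin n → ℝ)) ×ˢ ({0} : Set ℝ)))
        (convexHull ℝ {((b₀, 1) : (Fin n → ℝ) × ℝ)}) :=
      convexHull_union hAne (Set.singleton_nonempty _)
    rw [hjoin, convexHull_singleton] at hp
    obtain ⟨r, hr, b, hb, hpseg⟩ := mem_convexJoin.mp hp
    rw [Set.mem_singleton_iff] at hb
    subst hb
    obtain ⟨a, c, ha, hc, hac, habr⟩ := hpseg
    -- r.2 = 0
    have hr2 : r.2 = 0 := by
      have hsub : convexHull ℝ ((A₀ : Set (Fin n → ℝ)) ×ˢ ({0} : Set ℝ)) ⊆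
          Prod.snd ⁻¹' ({0} : Set ℝ) := by
        apply convexHull_min
        · rintro ⟨u, v⟩ ⟨_, hv⟩; exact hv
        · exact (convex_singleton (0:ℝ)).linear_preimage (LinearMap.snd ℝ _ _)
      exact hsub hr
    have hsnd : a * r.2 + c * 1 = p.2 := congrArg Prod.snd habr
    rw [hr2, mul_zero, zero_add, mul_one, hp2] at hsnd
    have ha0 : a = 0 := by linarith
    have hpb : p = (b₀, 1) := by
      rw [← habr, ha0, hsnd]
      simp
    have hx1 : x = b₀ + q.1 := by
      have := congrArg Prod.fst hpq
      rw [hpb] at this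
      exact this.symm
    exact Set.mem_add.mpr ⟨b₀, rfl, q.1, hq.1, hx1.symm⟩
  · rintro hxb
    obtain ⟨b, hb, k', hk', hbk⟩ := Set.mem_add.mp hxb
    rw [Set.mem_singleton_iff] at hb
    subst hb
    have h1F : (1:ℝ) ∈ F := by
      refine Set.mem_add.mpr ⟨(b, 1), subset_convexHull ℝ S (Or.inr rfl),
        (k', 0), ⟨hk', rfl⟩, ?_⟩
      simp [Prod.ext_iff, hbk]
    exact le_antisymm h01.2 (le_csSup hFbdd h1F)
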